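/- Let p(x) = x^T A x − tr(A) where A is a symmetric d×d matrix with Frobenius norm 1. Then, writing t = ⌊log₂ d⌋, one can write A/ (as p) in the form p = 2(p₁ + p₂ + p₄ + ... + p_{2^t} + p_d), where each p_k(x) = x^T A_k x − tr(A_k) and A_k is a symmetric matrix of rank at most k with spectral norm at most 1/√k. -/

import Mathlib

open Multiset

/-- Euclidean norm of a vector in ℝ^d. -/
noncomputable def eucNorm {d : ℕ} (x : Fin d → ℝ) : ℝ := Real.sqrt (∑ i, x i ^ 2)

/-- Euclidean inner product on ℝ^d. -/
def edot {d : ℕ} (v x : Fin d → ℝ) : ℝ := ∑ i, v i * x i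

/-- Mean of a finite multiset of points in ℝ^d. -/
noncomputable def mmean {d : ℕ} (S : Multiset (Fin d → ℝ)) : Fin d → ℝ :=
  (S.card : ℝ)⁻¹ • S.sum

/-- Second-moment matrix (1/|S|) Σ_{x∈S} (x−μ)(x−μ)^T of a multiset about a point μ. -/
noncomputable def secondMoment {d : ℕ} (S : Multiset (Fin d → ℝ)) (μ : Fin d → ℝ) :
    Matrix (Fin d) (Fin d) ℝ :=
  (S.card : ℝ)⁻¹ • (S.map (fun x => Matrix.vecMulVec (x - μ) (x - μ))).sum

/-- Spectral norm of a symmetric PSD matrix: the supremum of v^T M v over unit vectors. -/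
noncomputable def specNorm {d : ℕ} (M : Matrix (Fin d) (Fin d) ℝ) : ℝ :=
  ⨆ v : {v : Fin d → ℝ // eucNorm v = 1}, dotProduct v.1 (M.mulVec v.1)

section Aux

variable {d : ℕ}

theorem drd_rank_add_le (A B : Matrix (Fin d) (Fin d) ℝ) :
    (A + B).rank ≤ A.rank + B.rank := by
  unfold Matrix.rank
  rw [Matrix.mulVecLin_add]
  refine le_trans (Submodule.finrank_mono ?_) (Submodule.finrank_add_le_finrank_add_finrank _ _)
  rintro y ⟨x, rfl⟩
  exact Submodule.add_mem_sup ⟨x, rfl⟩ ⟨x, rfl⟩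

theorem drd_rank_vecMulVec (w v : Fin d → ℝ) : (Matrix.vecMulVec w v).rank ≤ 1 := by
  rw [Matrix.vecMulVec_eq (Fin 1)]
  exact (Matrix.rank_mul_le_left _ _).trans (Matrix.rank_le_card_width _ |>.trans (by simp))

theorem drd_rank_sum_le (μ : Fin d → ℝ) (u : Fin d → Fin d → ℝ) (s : Finset (Fin d)) :
    (∑ m ∈ s, μ m • Matrix.vecMulVec (u m) (u m)).rank ≤ s.card := by
  classical
  induction s using Finset.induction_on with
  | empty => simp
  | insert a s' hx ih =>
    rw [Finset.sum_insert hx, Finset.card_insert_of_notMem hx]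
    refine (drd_rank_add_le _ _).trans ?_
    have h1 : (μ a • Matrix.vecMulVec (u a) (u a)).rank ≤ 1 := by
      have : μ a • Matrix.vecMulVec (u a) (u a) = Matrix.vecMulVec (μ a • u a) (u a) := by
        ext i j
        simp [Matrix.vecMulVec_apply, mul_assoc]
      rw [this]
      exact drd_rank_vecMulVec _ _
    omega

theorem drd_dot_block (lam : Fin d → ℝ) (u : Fin d → Fin d → ℝ) (s : Finset (Fin d))
    (v : Fin d → ℝ) :
    dotProduct v ((∑ m ∈ s, lam m • Matrix.vecMulVec (u m) (u m)).mulVec v)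
      = ∑ m ∈ s, lam m * (∑ j, u m j * v j)^2 := by
  simp only [dotProduct, Matrix.mulVec, Matrix.sum_apply, Matrix.smul_apply,
    Matrix.vecMulVec_apply, smul_eq_mul, Finset.sum_mul, Finset.mul_sum]
  rw [show ∀ (f : Fin d → Fin d → Fin d → ℝ), (∑ i, ∑ j, ∑ m ∈ s, f i j m)
      = ∑ m ∈ s, ∑ i, ∑ j, f i j m from fun f => by
    have h1 : ∀ i, (∑ j, ∑ m ∈ s, f i j m) = ∑ m ∈ s, ∑ j, f i j m := fun i => Finset.sum_comm
    simp_rw [h1]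
    exact Finset.sum_comm]
  refine Finset.sum_congr rfl fun m _ => ?_
  simp_rw [sq, Finset.sum_mul_sum, Finset.mul_sum]
  exact Finset.sum_congr rfl fun i _ => Finset.sum_congr rfl fun j _ => by ring

theorem drd_unit_sum (u : Fin d → Fin d → ℝ)
    (ortho2 : ∀ j l, (∑ i, u i j * u i l) = if j = l then (1:ℝ) else 0)
    (v : Fin d → ℝ) : ∑ m, (∑ j, u m j * v j)^2 = ∑ j, v j ^2 := by
  calc ∑ m, (∑ j, u m j * v j)^2
      = ∑ m, ∑ j, ∑ l, (u m j * v j) * (u m l * v l) := by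
        simp_rw [sq, Finset.sum_mul_sum]
    _ = ∑ j, ∑ l, (v j * v l) * ∑ m, u m j * u m l := by
        rw [Finset.sum_comm]
        refine Finset.sum_congr rfl fun j _ => ?_
        rw [Finset.sum_comm]
        refine Finset.sum_congr rfl fun l _ => ?_
        rw [Finset.mul_sum]
        exact Finset.sum_congr rfl fun m _ => by ring
    _ = ∑ j, v j ^ 2 := by
        simp [ortho2, mul_ite, Finset.sum_ite_eq, sq]

theorem drd_sum_sq (A : Matrix (Fin d) (Fin d) ℝ) (lam : Fin d → ℝ) (u : Fin d → Fin d → ℝ)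
    (ortho1 : ∀ m n, (∑ i, u m i * u n i) = if m = n then (1:ℝ) else 0)
    (hAe : ∀ i j, A i j = ∑ m, lam m * (u m i * u m j))
    (hfrob : ∑ i, ∑ j, A i j ^ 2 = 1) :
    ∑ m, lam m ^ 2 = 1 := by
  have heig : ∀ m i, (∑ j, u m j * A i j) = lam m * u m i := by
    intro m i
    calc (∑ j, u m j * A i j) = ∑ j, ∑ n, lam n * u n i * (u n j * u m j) := by
          refine Finset.sum_congr rfl fun j _ => ?_
          rw [hAe, Finset.mul_sum]
          exact Finset.sum_congr rfl fun n _ => by ring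
      _ = ∑ n, (lam n * u n i) * ∑ j, u n j * u m j := by
          rw [Finset.sum_comm]
          exact Finset.sum_congr rfl fun n _ => by rw [Finset.mul_sum]
      _ = lam m * u m i := by simp [ortho1, mul_ite, Finset.sum_ite_eq]
  calc ∑ m, lam m ^ 2 = ∑ m, (lam m * lam m) * ∑ i, u m i * u m i := by
        simp [ortho1, sq]
    _ = ∑ m, ∑ i, (lam m * u m i) * (lam m * u m i) := by
        refine Finset.sum_congr rfl fun m _ => ?_
        rw [Finset.mul_sum]
        exact Finset.sum_congr rfl fun i _ => by ring
    _ = ∑ m, ∑ i, (lam m * u m i) * (∑ j, u m j * A i j) := by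
        simp_rw [heig]
    _ = ∑ i, ∑ j, (∑ m, lam m * (u m i * u m j)) * A i j := by
        rw [Finset.sum_comm]
        refine Finset.sum_congr rfl fun i _ => ?_
        simp_rw [Finset.mul_sum]
        rw [Finset.sum_comm]
        simp_rw [Finset.sum_mul]
        exact Finset.sum_congr rfl fun j _ => Finset.sum_congr rfl fun m _ => by ring
    _ = 1 := by simp_rw [← hAe]; simpa [sq] using hfrob

end Aux

/-- Any symmetric A with Frobenius norm 1 (equivalently, the polynomial
p(x) = x^TAx − tr A) decomposes as A = 2(B₁ + B₂ + B₄ + ... + B_{2^t} + B_d) with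
t = ⌊log₂ d⌋, where each B_k is symmetric of rank ≤ k and spectral norm ≤ 1/√k. -/
theorem dyadic_rank_decomposition {d : ℕ} (hd : 1 ≤ d)
    (A : Matrix (Fin d) (Fin d) ℝ) (hsymm : A.IsSymm)
    (hfrob : ∑ i, ∑ j, A i j ^ 2 = 1) :
    ∃ B : ℕ → Matrix (Fin d) (Fin d) ℝ,
      (∀ k, (B k).IsSymm) ∧
      (∀ k, (B k).rank ≤ k) ∧
      (∀ k, ∀ v : Fin d → ℝ, eucNorm v = 1 →
        |dotProduct v ((B k).mulVec v)| ≤ 1 / Real.sqrt k) ∧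
      A = (2 : ℝ) • ((∑ j ∈ Finset.range (Nat.log2 d + 1), B (2 ^ j)) + B d) := by
  classical
  have hA : A.IsHermitian := by
    rwa [Matrix.IsHermitian, Matrix.conjTranspose_eq_transpose_of_trivial]
  set U : Matrix (Fin d) (Fin d) ℝ := (hA.eigenvectorUnitary : Matrix (Fin d) (Fin d) ℝ) with hU
  set lam : Fin d → ℝ := hA.eigenvalues with hlam
  set u : Fin d → Fin d → ℝ := fun m i => U i m with hu
  have ortho1 : ∀ m n, (∑ i, u m i * u n i) = if m = n then (1:ℝ) else 0 := by
    intro m n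
    have h : star U * U = 1 := Unitary.coe_star_mul_self _
    have := congrFun (congrFun h m) n
    simpa [Matrix.mul_apply, Matrix.one_apply, Matrix.star_apply, mul_comm, hu] using this
  have ortho2 : ∀ j l, (∑ i, u i j * u i l) = if j = l then (1:ℝ) else 0 := by
    intro j l
    have h : U * star U = 1 := Unitary.coe_mul_star_self _
    have := congrFun (congrFun h j) l
    simpa [Matrix.mul_apply, Matrix.one_apply, Matrix.star_apply, mul_comm, hu] using this
  have hAe : ∀ i j, A i j = ∑ m, lam m * (u m i * u m j) := by
    intro i j
    conv_lhs => rw [hA.spectral_theorem]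
    simp only [Unitary.conjStarAlgAut_apply, Matrix.mul_apply, Matrix.diagonal_apply, Matrix.star_apply, Function.comp,
      RCLike.ofReal_real_eq_id, id_eq, star_trivial, Finset.sum_mul, ite_mul, zero_mul]
    rw [Finset.sum_comm]
    simp [Finset.sum_ite_eq, mul_comm, mul_assoc, mul_left_comm, hu, hU, hlam]
  have hsum : ∑ m, lam m ^ 2 = 1 := drd_sum_sq A lam u ortho1 hAe hfrob
  have hlam1 : ∀ m, lam m ^ 2 ≤ 1 := by
    intro m
    rw [← hsum]
    exact Finset.single_le_sum (fun i _ => sq_nonneg (lam i)) (Finset.mem_univ m)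
  -- threshold sets
  set T : ℕ → Finset (Fin d) := fun k => Finset.univ.filter (fun i => 1 ≤ (k:ℝ) * lam i ^ 2)
    with hT
  have hT0 : T 0 = ∅ := by
    simp [hT]
  have hTcard : ∀ k, (T k).card ≤ k := by
    intro k
    have h1 : ((T k).card : ℝ) ≤ ∑ i ∈ T k, (k:ℝ) * lam i ^ 2 := by
      rw [Finset.card_eq_sum_ones, Nat.cast_sum]
      refine Finset.sum_le_sum fun i hi => ?_
      simpa using (Finset.mem_filter.mp hi).2
    have h2 : ∑ i ∈ T k, (k:ℝ) * lam i ^ 2 ≤ (k:ℝ) := by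
      rw [← Finset.mul_sum]
      calc (k:ℝ) * ∑ i ∈ T k, lam i ^ 2 ≤ (k:ℝ) * ∑ i, lam i ^ 2 := by
            refine mul_le_mul_of_nonneg_left ?_ (Nat.cast_nonneg k)
            exact Finset.sum_le_sum_of_subset_of_nonneg (Finset.subset_univ _)
              (fun i _ _ => sq_nonneg _)
        _ = (k:ℝ) := by rw [hsum, mul_one]
    exact_mod_cast h1.trans h2
  have hTsub : ∀ a b : ℕ, a ≤ b → T a ⊆ T b := by
    intro a b hab i hi
    rw [hT, Finset.mem_filter] at hi ⊢
    refine ⟨Finset.mem_univ _, hi.2.trans ?_⟩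
    exact mul_le_mul_of_nonneg_right (by exact_mod_cast hab) (sq_nonneg _)
  -- blocks
  set blk : Finset (Fin d) → Matrix (Fin d) (Fin d) ℝ :=
    fun s => ∑ m ∈ s, lam m • Matrix.vecMulVec (u m) (u m) with hblk
  have hblkA : blk Finset.univ = A := by
    ext i j
    simp only [hblk, Matrix.sum_apply, Matrix.smul_apply, Matrix.vecMulVec_apply, smul_eq_mul]
    exact (hAe i j).symm
  have hblksymm : ∀ (c : ℝ) (s : Finset (Fin d)), (c • blk s).IsSymm := by
    intro c s
    rw [Matrix.IsSymm, Matrix.transpose_smul]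
    congr 1
    rw [hblk, Matrix.transpose_sum]
    refine Finset.sum_congr rfl fun m _ => ?_
    rw [Matrix.transpose_smul]
    congr 1
    ext i j
    simp [Matrix.vecMulVec_apply, mul_comm]
  have hblkrank : ∀ (c : ℝ) (s : Finset (Fin d)), (c • blk s).rank ≤ s.card := by
    intro c s
    rw [hblk, Finset.smul_sum]
    simp_rw [smul_smul]
    exact drd_rank_sum_le _ _ _
  -- spectral key
  have key : ∀ (c M : ℝ) (s : Finset (Fin d)), 0 ≤ c → 0 ≤ M →
      (∀ i ∈ s, lam i ^ 2 ≤ M ^ 2) →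
      ∀ v : Fin d → ℝ, eucNorm v = 1 →
      |dotProduct v ((c • blk s).mulVec v)| ≤ c * M := by
    intro c M s hc hM hb v hv
    have hv2 : ∑ j, v j ^ 2 = 1 := by
      have h := congrArg (· ^ 2) hv
      simpa [eucNorm, Real.sq_sqrt (Finset.sum_nonneg fun i _ => sq_nonneg (v i))] using h
    have hcol : ∑ m, (∑ j, u m j * v j) ^ 2 = 1 := by
      rw [drd_unit_sum u ortho2 v, hv2]
    rw [Matrix.smul_mulVec, dotProduct_smul, smul_eq_mul, abs_mul, abs_of_nonneg hc]
    refine mul_le_mul_of_nonneg_left ?_ hc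
    rw [hblk, drd_dot_block]
    calc |∑ m ∈ s, lam m * (∑ j, u m j * v j) ^ 2|
        ≤ ∑ m ∈ s, |lam m * (∑ j, u m j * v j) ^ 2| := Finset.abs_sum_le_sum_abs _ _
      _ ≤ ∑ m ∈ s, M * (∑ j, u m j * v j) ^ 2 := by
          refine Finset.sum_le_sum fun m hm => ?_
          rw [abs_mul, abs_of_nonneg (sq_nonneg (∑ j, u m j * v j))]
          refine mul_le_mul_of_nonneg_right ?_ (sq_nonneg _)
          have : |lam m| = Real.sqrt (lam m ^ 2) := (Real.sqrt_sq_eq_abs _).symm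
          rw [this]
          calc Real.sqrt (lam m ^ 2) ≤ Real.sqrt (M ^ 2) := Real.sqrt_le_sqrt (hb m hm)
            _ = M := Real.sqrt_sq hM
      _ ≤ ∑ m, M * (∑ j, u m j * v j) ^ 2 := by
          refine Finset.sum_le_sum_of_subset_of_nonneg (Finset.subset_univ _) fun m _ _ => ?_
          positivity
      _ = M := by rw [← Finset.mul_sum, hcol, mul_one]
  -- bound on eigenvalues outside T (k/2)
  have hbound : ∀ (k : ℕ), 1 ≤ k → ∀ i, i ∉ T (k / 2) → lam i ^ 2 ≤ 4 / (k : ℝ) := by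
    intro k hk i hi
    have hknn : (0:ℝ) < (k:ℝ) := by exact_mod_cast hk
    rw [le_div_iff₀ hknn]
    have hi' : ((k/2 : ℕ) : ℝ) * lam i ^ 2 < 1 := by
      by_contra h
      exact hi (Finset.mem_filter.mpr ⟨Finset.mem_univ _, le_of_not_gt h⟩)
    rcases eq_or_lt_of_le hk with h1 | h2k
    · rw [← h1]
      simp only [Nat.cast_one, mul_one]
      linarith [hlam1 i]
    · have h2 : (k : ℝ) ≤ 4 * ((k/2 : ℕ) : ℝ) := by
        have : k ≤ 4 * (k/2) := by omega
        exact_mod_cast this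
      nlinarith [sq_nonneg (lam i)]
  have hboundc : ∀ i, i ∉ T (2 ^ Nat.log2 d) → lam i ^ 2 ≤ 4 / (d:ℝ) := by
    intro i hi
    have hdpos : (0:ℝ) < (d:ℝ) := by exact_mod_cast hd
    rw [le_div_iff₀ hdpos]
    have hi' : ((2 ^ Nat.log2 d : ℕ) : ℝ) * lam i ^ 2 < 1 := by
      by_contra h
      exact hi (Finset.mem_filter.mpr ⟨Finset.mem_univ _, le_of_not_gt h⟩)
    have h2 : (d : ℝ) ≤ 2 * ((2 ^ Nat.log2 d : ℕ) : ℝ) := by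
      have h3 : d < 2 ^ (Nat.log2 d + 1) := Nat.lt_log2_self
      have h4 : d ≤ 2 * 2 ^ Nat.log2 d := by
        rw [pow_succ] at h3; omega
      exact_mod_cast h4
    nlinarith [sq_nonneg (lam i)]
  have hM2 : ∀ k : ℕ, 1 ≤ k → (2 / Real.sqrt k) ^ 2 = 4 / (k:ℝ) := by
    intro k hk
    rw [div_pow, Real.sq_sqrt (Nat.cast_nonneg k)]
    norm_num
  have hMpos : ∀ k : ℕ, 1 ≤ k → (0:ℝ) < 2 / Real.sqrt k := by
    intro k hk
    have : (0:ℝ) < Real.sqrt k := Real.sqrt_pos.mpr (by exact_mod_cast hk)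
    positivity
  set t := Nat.log2 d with htdef
  have h2t_le_d : 2 ^ t ≤ d := Nat.log2_self_le (by omega)
  -- telescoping
  have htel : ∀ n : ℕ, ∑ j ∈ Finset.range (n+1), blk (T (2^j) \ T (2^j / 2)) = blk (T (2^n)) := by
    intro n
    induction n with
    | zero => simp [hT0]
    | succ n ih =>
      rw [Finset.sum_range_succ, ih]
      have hdiv : 2 ^ (n+1) / 2 = 2 ^ n := by
        rw [pow_succ]; exact Nat.mul_div_cancel _ (by norm_num)
      rw [hdiv]
      have hsub := hTsub (2^n) (2^(n+1)) (Nat.pow_le_pow_right (by norm_num) (by omega))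
      simp only [hblk]
      rw [add_comm]
      exact Finset.sum_sdiff hsub
  set BB : ℕ → Matrix (Fin d) (Fin d) ℝ := fun k =>
    if k = d then
      (if d = 2 ^ t then (4⁻¹ : ℝ) • blk ((T (d / 2))ᶜ) else (2⁻¹ : ℝ) • blk ((T (2 ^ t))ᶜ))
    else if (∃ j, j ≤ t ∧ k = 2 ^ j) then (2⁻¹ : ℝ) • blk (T k \ T (k / 2))
    else 0 with hBB
  refine ⟨BB, ?_, ?_, ?_, ?_⟩
  · -- symmetry
    intro k
    simp only [hBB]
    split_ifs <;> first | exact hblksymm _ _ | simp [Matrix.IsSymm]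
  · -- rank
    intro k
    simp only [hBB]
    split_ifs with h1 h2 h3
    · refine (hblkrank _ _).trans ?_
      have := Finset.card_le_univ ((T (d/2))ᶜ)
      simpa [h1] using this
    · refine (hblkrank _ _).trans ?_
      have := Finset.card_le_univ ((T (2^t))ᶜ)
      simpa [h1] using this
    · exact (hblkrank _ _).trans ((Finset.card_le_card Finset.sdiff_subset).trans (hTcard k))
    · simp
  · -- spectral bound
    intro k v hv
    simp only [hBB]
    split_ifs with h1 h2 h3
    · -- k = d, d = 2^t
      rw [h1]
      have hkey := key 4⁻¹ (2 / Real.sqrt d) ((T (d/2))ᶜ) (by norm_num)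
        (le_of_lt (hMpos d hd))
        (fun i hi => by
          rw [hM2 d hd]
          exact hbound d hd i (Finset.mem_compl.mp hi)) v hv
      refine hkey.trans ?_
      have h5 : (0:ℝ) ≤ 1 / Real.sqrt d := by positivity
      have h6 : (4⁻¹ : ℝ) * (2 / Real.sqrt d) = (1/2) * (1 / Real.sqrt d) := by ring
      rw [h6]
      linarith
    · -- k = d, d ≠ 2^t
      rw [h1]
      have hkey := key 2⁻¹ (2 / Real.sqrt d) ((T (2^t))ᶜ) (by norm_num)
        (le_of_lt (hMpos d hd))
        (fun i hi => by
          rw [hM2 d hd]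
          exact hboundc i (Finset.mem_compl.mp hi)) v hv
      refine hkey.trans (le_of_eq ?_)
      ring
    · -- dyadic
      obtain ⟨j, hjt, rfl⟩ := h3
      have hk1 : 1 ≤ 2 ^ j := Nat.one_le_two_pow
      have hkey := key 2⁻¹ (2 / Real.sqrt ((2^j : ℕ) : ℝ)) (T (2^j) \ T (2^j / 2)) (by norm_num)
        (le_of_lt (hMpos _ hk1))
        (fun i hi => by
          rw [hM2 _ hk1]
          exact hbound (2^j) hk1 i (Finset.mem_sdiff.mp hi).2) v hv
      refine hkey.trans (le_of_eq ?_)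
      ring
    · simp [Matrix.zero_mulVec, dotProduct_zero]
  · -- decomposition
    by_cases hpd : d = 2 ^ t
    · -- d is a power of two
      have hBd : BB d = (4⁻¹ : ℝ) • blk ((T (d / 2))ᶜ) := by
        simp only [hBB, if_true]
        rw [if_pos hpd]
      rcases Nat.eq_zero_or_pos t with ht0 | htpos
      · -- t = 0, d = 1
        have hd1 : d = 1 := by rw [hpd, ht0, pow_zero]
        rw [ht0]
        rw [Finset.sum_range_one]
        have h20 : (2:ℕ) ^ (0:ℕ) = d := by simp [hd1]
        rw [h20, hBd]
        have hdh : d / 2 = 0 := by omega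
        have hcompl : (T (d / 2))ᶜ = Finset.univ := by
          rw [hdh, hT0]
          simp
        rw [hcompl, hblkA]
        module
      · -- t ≥ 1
        obtain ⟨n, hn⟩ : ∃ n, t = n + 1 := ⟨t - 1, by omega⟩
        have hdd : d = 2 ^ (n+1) := by rw [hpd, hn]
        have hBj : ∀ j ∈ Finset.range (n+1), BB (2^j) = (2⁻¹:ℝ) • blk (T (2^j) \ T (2^j / 2)) := by
          intro j hj
          have hjn : j ≤ n := Nat.lt_succ_iff.mp (Finset.mem_range.mp hj)
          have hne : 2 ^ j ≠ d := by
            rw [hdd]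
            exact Nat.ne_of_lt (Nat.pow_lt_pow_right (by norm_num) (by omega))
          simp only [hBB]
          rw [if_neg hne, if_pos ⟨j, by omega, rfl⟩]
        rw [hn, Finset.sum_range_succ, Finset.sum_congr rfl hBj, ← Finset.smul_sum, htel n]
        have h2t : (2:ℕ) ^ (n+1) = d := hdd.symm
        rw [h2t, hBd]
        have hd2 : d / 2 = 2 ^ n := by rw [hdd, pow_succ]; exact Nat.mul_div_cancel _ (by norm_num)
        rw [hd2]
        have hXY : blk (T (2^n)) + blk ((T (2^n))ᶜ) = A := by
          rw [← hblkA]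
          simp only [hblk]
          exact Finset.sum_add_sum_compl _ _
        rw [← hXY]
        module
    · -- d is not a power of two
      have h2t_lt_d : 2 ^ t < d := lt_of_le_of_ne h2t_le_d (fun h => hpd h.symm)
      have hBd : BB d = (2⁻¹ : ℝ) • blk ((T (2 ^ t))ᶜ) := by
        simp only [hBB, if_true]
        rw [if_neg hpd]
      have hBj : ∀ j ∈ Finset.range (t+1), BB (2^j) = (2⁻¹:ℝ) • blk (T (2^j) \ T (2^j / 2)) := by
        intro j hj
        have hjt : j ≤ t := Nat.lt_succ_iff.mp (Finset.mem_range.mp hj)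
        have hne : 2 ^ j ≠ d :=
          Nat.ne_of_lt (lt_of_le_of_lt (Nat.pow_le_pow_right (by norm_num) hjt) h2t_lt_d)
        simp only [hBB]
        rw [if_neg hne, if_pos ⟨j, hjt, rfl⟩]
      rw [Finset.sum_congr rfl hBj, ← Finset.smul_sum, htel t, hBd]
      have hXY : blk (T (2^t)) + blk ((T (2^t))ᶜ) = A := by
        rw [← hblkA]
        simp only [hblk]
        exact Finset.sum_add_sum_compl _ _
      rw [← hXY]
      module
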